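/- Let α satisfy 1 < α < 2 and define f_α(x,y) := |x-y|^α + (x+y)^α - 2x^α for x ≥ 0 and y > 0. Then for each fixed y > 0, the function x ↦ f_α(x,y) is positive, strictly decreasing in x, and tends to 0 as x → ∞. -/

import Mathlib

open Filter

private lemma mvt_ub {p a b C : ℝ} (hp : 0 < p) (ha : 0 < a) (hab : a ≤ b)
    (hC : ∀ t ∈ Set.Icc a b, p * t ^ (p - 1) ≤ C) : b ^ p - a ^ p ≤ C * (b - a) := by
  have hmono : MonotoneOn (fun t : ℝ => C * t - t ^ p) (Set.Icc a b) := by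
    have hcont : ContinuousOn (fun t : ℝ => C * t - t ^ p) (Set.Icc a b) :=
      ((continuous_const.mul continuous_id).sub
        (continuous_id.rpow_const fun _ => Or.inr hp.le)).continuousOn
    refine monotoneOn_of_hasDerivWithinAt_nonneg (f' := fun t => C - p * t ^ (p - 1))
      (convex_Icc a b) hcont ?_ ?_
    · intro t ht
      rw [interior_Icc] at ht
      have h : HasDerivAt (fun t : ℝ => C * t - t ^ p) (C - p * t ^ (p - 1)) t := by
        have := (hasDerivAt_id' (x := t)).const_mul C |>.sub
          (Real.hasDerivAt_rpow_const (p := p) (Or.inl (ha.trans ht.1).ne'))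
        simpa [Pi.sub_def] using this
      exact h.hasDerivWithinAt
    · intro t ht
      rw [interior_Icc] at ht
      have := hC t ⟨ht.1.le, ht.2.le⟩
      show 0 ≤ C - p * t ^ (p - 1)
      linarith
  have h := hmono (Set.left_mem_Icc.2 hab) (Set.right_mem_Icc.2 hab) hab
  simp only at h
  nlinarith [h]

private lemma mvt_lb {p a b c : ℝ} (hp : 0 < p) (ha : 0 < a) (hab : a ≤ b)
    (hc : ∀ t ∈ Set.Icc a b, c ≤ p * t ^ (p - 1)) : c * (b - a) ≤ b ^ p - a ^ p := by
  have hmono : MonotoneOn (fun t : ℝ => t ^ p - c * t) (Set.Icc a b) := by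
    have hcont : ContinuousOn (fun t : ℝ => t ^ p - c * t) (Set.Icc a b) :=
      ((continuous_id.rpow_const fun _ => Or.inr hp.le).sub
        (continuous_const.mul continuous_id)).continuousOn
    refine monotoneOn_of_hasDerivWithinAt_nonneg (f' := fun t => p * t ^ (p - 1) - c)
      (convex_Icc a b) hcont ?_ ?_
    · intro t ht
      rw [interior_Icc] at ht
      have h : HasDerivAt (fun t : ℝ => t ^ p - c * t) (p * t ^ (p - 1) - c) t := by
        have := (Real.hasDerivAt_rpow_const (p := p)
          (Or.inl (ha.trans ht.1).ne')).sub ((hasDerivAt_id' (x := t)).const_mul c)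
        simpa [Pi.sub_def] using this
      exact h.hasDerivWithinAt
    · intro t ht
      rw [interior_Icc] at ht
      have := hc t ⟨ht.1.le, ht.2.le⟩
      show 0 ≤ p * t ^ (p - 1) - c
      linarith
  have h := hmono (Set.left_mem_Icc.2 hab) (Set.right_mem_Icc.2 hab) hab
  simp only at h
  nlinarith [h]

theorem stmt0 (α y : ℝ) (hα1 : 1 < α) (hα2 : α < 2) (hy : 0 < y) :
    (∀ x : ℝ, 0 ≤ x → 0 < |x - y| ^ α + (x + y) ^ α - 2 * x ^ α) ∧
    StrictAntiOn (fun x : ℝ => |x - y| ^ α + (x + y) ^ α - 2 * x ^ α) (Set.Ici 0) ∧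
    Tendsto (fun x : ℝ => |x - y| ^ α + (x + y) ^ α - 2 * x ^ α) atTop (nhds 0) := by
  have hα0 : (0:ℝ) < α := by linarith
  set f : ℝ → ℝ := fun x => |x - y| ^ α + (x + y) ^ α - 2 * x ^ α with hf
  -- continuity pieces
  have hc1 : Continuous (fun x : ℝ => (x - y) ^ α + (x + y) ^ α - 2 * x ^ α) :=
    (((continuous_id.sub continuous_const).rpow_const fun _ => Or.inr hα0.le).add
      ((continuous_id.add continuous_const).rpow_const fun _ => Or.inr hα0.le)).sub
      (continuous_const.mul (continuous_id.rpow_const fun _ => Or.inr hα0.le))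
  have hc2 : Continuous (fun x : ℝ => (y - x) ^ α + (x + y) ^ α - 2 * x ^ α) :=
    (((continuous_const.sub continuous_id).rpow_const fun _ => Or.inr hα0.le).add
      ((continuous_id.add continuous_const).rpow_const fun _ => Or.inr hα0.le)).sub
      (continuous_const.mul (continuous_id.rpow_const fun _ => Or.inr hα0.le))
  -- strict antitonicity on [y, ∞)
  have hA1 : StrictAntiOn (fun x : ℝ => (x - y) ^ α + (x + y) ^ α - 2 * x ^ α)
      (Set.Ici y) := by
    refine strictAntiOn_of_hasDerivWithinAt_neg
      (f' := fun x => α * (x - y) ^ (α - 1) + α * (x + y) ^ (α - 1) - 2 * (α * x ^ (α - 1)))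
      (convex_Ici y) hc1.continuousOn ?_ ?_
    · intro x hx
      rw [interior_Ici] at hx
      replace hx : y < x := hx
      have hx0 : 0 < x := hy.trans hx
      have d1 : HasDerivAt (fun x : ℝ => (x - y) ^ α) (α * (x - y) ^ (α - 1) * 1) x :=
        HasDerivAt.comp x (Real.hasDerivAt_rpow_const (Or.inl (sub_pos.2 hx).ne'))
          ((hasDerivAt_id x).sub_const y)
      have d2 : HasDerivAt (fun x : ℝ => (x + y) ^ α) (α * (x + y) ^ (α - 1) * 1) x :=
        HasDerivAt.comp x (Real.hasDerivAt_rpow_const (Or.inl (by linarith : (0:ℝ) < x + y).ne'))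
          ((hasDerivAt_id x).add_const y)
      have d3 : HasDerivAt (fun x : ℝ => 2 * x ^ α) (2 * (α * x ^ (α - 1))) x :=
        (Real.hasDerivAt_rpow_const (Or.inl hx0.ne')).const_mul 2
      have := (d1.add d2).sub d3
      simpa [Pi.sub_def, Pi.add_def] using this.hasDerivWithinAt
    · intro x hx
      rw [interior_Ici] at hx
      replace hx : y < x := hx
      have hx0 : 0 < x := hy.trans hx
      show α * (x - y) ^ (α - 1) + α * (x + y) ^ (α - 1) - 2 * (α * x ^ (α - 1)) < 0
      have sc := Real.strictConcaveOn_rpow (p := α - 1) (by linarith) (by linarith)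
      have key := sc.2 (Set.mem_Ici.2 (by linarith : (0:ℝ) ≤ x - y))
        (Set.mem_Ici.2 (by linarith : (0:ℝ) ≤ x + y))
        (by intro h; linarith : x - y ≠ x + y)
        (by norm_num : (0:ℝ) < 1/2) (by norm_num : (0:ℝ) < 1/2) (by norm_num)
      simp only [smul_eq_mul] at key
      rw [show (1/2 : ℝ) * (x - y) + (1/2 : ℝ) * (x + y) = x by ring] at key
      have h2 : (x - y) ^ (α - 1) + (x + y) ^ (α - 1) < 2 * x ^ (α - 1) := by linarith
      linarith [mul_lt_mul_of_pos_left h2 hα0]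
  -- strict antitonicity on [0, y]
  have hA2 : StrictAntiOn (fun x : ℝ => (y - x) ^ α + (x + y) ^ α - 2 * x ^ α)
      (Set.Icc 0 y) := by
    refine strictAntiOn_of_hasDerivWithinAt_neg
      (f' := fun x => α * (y - x) ^ (α - 1) * (-1) + α * (x + y) ^ (α - 1)
        - 2 * (α * x ^ (α - 1)))
      (convex_Icc 0 y) hc2.continuousOn ?_ ?_
    · intro x hx
      rw [interior_Icc] at hx
      obtain ⟨hx1, hx2⟩ := hx
      have d1 : HasDerivAt (fun x : ℝ => (y - x) ^ α) (α * (y - x) ^ (α - 1) * (-1)) x :=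
        HasDerivAt.comp x (Real.hasDerivAt_rpow_const (Or.inl (sub_pos.2 hx2).ne'))
          ((hasDerivAt_id x).const_sub y)
      have d2 : HasDerivAt (fun x : ℝ => (x + y) ^ α) (α * (x + y) ^ (α - 1) * 1) x :=
        HasDerivAt.comp x (Real.hasDerivAt_rpow_const (Or.inl (by linarith : (0:ℝ) < x + y).ne'))
          ((hasDerivAt_id x).add_const y)
      have d3 : HasDerivAt (fun x : ℝ => 2 * x ^ α) (2 * (α * x ^ (α - 1))) x :=
        (Real.hasDerivAt_rpow_const (Or.inl hx1.ne')).const_mul 2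
      have := (d1.add d2).sub d3
      simpa [Pi.sub_def, Pi.add_def] using this.hasDerivWithinAt
    · intro x hx
      rw [interior_Icc] at hx
      obtain ⟨hx1, hx2⟩ := hx
      show α * (y - x) ^ (α - 1) * (-1) + α * (x + y) ^ (α - 1) - 2 * (α * x ^ (α - 1)) < 0
      -- need (x+y)^(α-1) < (y-x)^(α-1) + 2 * x^(α-1)
      have hsub : (x + y) ^ (α - 1) ≤ (y - x) ^ (α - 1) + (2 * x) ^ (α - 1) := by
        have h := NNReal.rpow_add_le_add_rpow (⟨y - x, by linarith⟩ : NNReal)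
          (⟨2 * x, by linarith⟩ : NNReal) (p := α - 1) (by linarith) (by linarith)
        have he : ((⟨y - x, by linarith⟩ : NNReal) + (⟨2 * x, by linarith⟩ : NNReal)) =
            (⟨x + y, by linarith⟩ : NNReal) := by ext; simp; ring
        erw [he] at h
        exact_mod_cast h
      have h2x : (2 * x) ^ (α - 1) < 2 * x ^ (α - 1) := by
        rw [Real.mul_rpow (by norm_num) hx1.le]
        have h2 : (2:ℝ) ^ (α - 1) < 2 ^ (1:ℝ) :=
          Real.rpow_lt_rpow_of_exponent_lt (by norm_num) (by linarith)
        rw [Real.rpow_one] at h2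
        have := Real.rpow_pos_of_pos hx1 (α - 1)
        nlinarith
      have hkey : (x + y) ^ (α - 1) < (y - x) ^ (α - 1) + 2 * x ^ (α - 1) := by linarith
      linarith [mul_lt_mul_of_pos_left hkey hα0]
  -- transfer to f
  have habs1 : ∀ x ∈ Set.Ici y, f x = (x - y) ^ α + (x + y) ^ α - 2 * x ^ α := by
    intro x hx
    rw [hf]
    simp only
    rw [abs_of_nonneg (sub_nonneg.2 hx)]
  have habs2 : ∀ x ∈ Set.Icc (0:ℝ) y, f x = (y - x) ^ α + (x + y) ^ α - 2 * x ^ α := by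
    intro x hx
    rw [hf]
    simp only
    rw [abs_of_nonpos (sub_nonpos.2 hx.2), neg_sub]
  have F1 : StrictAntiOn f (Set.Icc 0 y) := fun u hu v hv huv => by
    rw [habs2 u hu, habs2 v hv]; exact hA2 hu hv huv
  have F2 : StrictAntiOn f (Set.Ici y) := fun u hu v hv huv => by
    rw [habs1 u hu, habs1 v hv]; exact hA1 hu hv huv
  have hanti : StrictAntiOn f (Set.Ici 0) := by
    intro a ha b hb hab
    simp only [Set.mem_Ici] at ha hb
    rcases le_total b y with h | h
    · exact F1 ⟨ha, hab.le.trans h⟩ ⟨hb, h⟩ hab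
    · rcases lt_or_ge a y with hay | hya
      · have h1 : f y < f a := F1 ⟨ha, hay.le⟩ ⟨hy.le, le_rfl⟩ hay
        have h2 : f b ≤ f y := by
          rcases eq_or_lt_of_le h with he | hlt
          · rw [← he]
          · exact (F2 (Set.mem_Ici.2 le_rfl) (Set.mem_Ici.2 h) hlt).le
        linarith
      · exact F2 hya h hab
  -- tendsto
  have hub : ∀ x : ℝ, y < x →
      f x ≤ 2 * α * (α - 1) * y ^ 2 * (x - y) ^ (α - 2) := by
    intro x hx
    have hx0 : 0 < x := hy.trans hx
    have hxy0 : 0 < x - y := sub_pos.2 hx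
    have e1 : (x + y) ^ α - x ^ α ≤ (α * (x + y) ^ (α - 1)) * ((x + y) - x) := by
      refine mvt_ub hα0 hx0 (by linarith) ?_
      intro t ht
      exact mul_le_mul_of_nonneg_left
        (Real.rpow_le_rpow (hx0.le.trans ht.1) ht.2 (by linarith)) hα0.le
    have e2 : (α * (x - y) ^ (α - 1)) * (x - (x - y)) ≤ x ^ α - (x - y) ^ α := by
      refine mvt_lb hα0 hxy0 (by linarith) ?_
      intro t ht
      exact mul_le_mul_of_nonneg_left
        (Real.rpow_le_rpow hxy0.le ht.1 (by linarith)) hα0.le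
    have e3 : (x + y) ^ (α - 1) - (x - y) ^ (α - 1) ≤
        ((α - 1) * (x - y) ^ (α - 1 - 1)) * ((x + y) - (x - y)) := by
      refine mvt_ub (by linarith) hxy0 (by linarith) ?_
      intro t ht
      exact mul_le_mul_of_nonneg_left
        (Real.rpow_le_rpow_of_nonpos hxy0 ht.1 (by linarith)) (by linarith)
    rw [show (x + y) - x = y by ring] at e1
    rw [show x - (x - y) = y by ring] at e2
    rw [show α - 1 - 1 = α - 2 by ring, show (x + y) - (x - y) = 2 * y by ring] at e3
    have e4 := mul_le_mul_of_nonneg_left e3 (by positivity : (0:ℝ) ≤ α * y)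
    rw [habs1 x (Set.mem_Ici.2 hx.le)]
    nlinarith [e1, e2, e4]
  have hlb : ∀ x : ℝ, y ≤ x → 0 ≤ f x := by
    intro x hx
    have cv := convexOn_rpow (p := α) hα1.le
    have key := cv.2 (Set.mem_Ici.2 (by linarith : (0:ℝ) ≤ x - y))
      (Set.mem_Ici.2 (by linarith : (0:ℝ) ≤ x + y))
      (by norm_num : (0:ℝ) ≤ 1/2) (by norm_num : (0:ℝ) ≤ 1/2) (by norm_num)
    simp only [smul_eq_mul] at key
    rw [show (1/2 : ℝ) * (x - y) + (1/2 : ℝ) * (x + y) = x by ring] at key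
    rw [habs1 x (Set.mem_Ici.2 hx)]
    linarith
  have htend : Tendsto f atTop (nhds 0) := by
    have h1 : Tendsto (fun x : ℝ => x - y) atTop atTop := by
      have := tendsto_atTop_add_const_right atTop (-y) tendsto_id
      simpa [sub_eq_add_neg] using this
    have h2 : Tendsto (fun x : ℝ => (x - y) ^ (α - 2)) atTop (nhds 0) := by
      have h3 := (tendsto_rpow_neg_atTop (show (0:ℝ) < 2 - α by linarith)).comp h1
      have he : (fun x : ℝ => (x - y) ^ (α - 2)) =
          (fun z : ℝ => z ^ (-(2 - α))) ∘ (fun x : ℝ => x - y) := by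
        funext x
        simp only [Function.comp]
        rw [show -(2 - α) = α - 2 by ring]
      rw [he]
      exact h3
    have h4 : Tendsto (fun x : ℝ => 2 * α * (α - 1) * y ^ 2 * (x - y) ^ (α - 2))
        atTop (nhds 0) := by
      simpa using h2.const_mul (2 * α * (α - 1) * y ^ 2)
    refine tendsto_of_tendsto_of_tendsto_of_le_of_le' tendsto_const_nhds h4 ?_ ?_
    · exact (eventually_ge_atTop y).mono fun x hx => hlb x hx
    · exact (eventually_gt_atTop y).mono fun x hx => hub x hx
  refine ⟨?_, hanti, htend⟩
  intro x hx
  have h1 : f (x + 1) < f x :=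
    hanti (Set.mem_Ici.2 hx) (Set.mem_Ici.2 (by linarith)) (lt_add_one x)
  have h2 : 0 ≤ f (x + 1) := by
    refine le_of_tendsto htend ((eventually_ge_atTop (x + 1)).mono fun t ht => ?_)
    rcases eq_or_lt_of_le ht with he | hlt
    · rw [← he]
    · exact (hanti (Set.mem_Ici.2 (by linarith : (0:ℝ) ≤ x + 1))
        (Set.mem_Ici.2 (by linarith)) hlt).le
  have : 0 < f x := by linarith
  simpa [hf] using this
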